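/- Let R be a commutative ring and n > 1. For N > 1, the greatest common divisor of the binomial coefficients C(N,1), C(N,2), …, C(N,N−1) equals 1 if N is not a prime power, and equals p if N = p^m is a power of a prime p. -/

import Mathlib

/-- If `p ∤ M` and `M ≥ 1`, then `p` does not divide `C(p^a * M, p^a)`. -/
lemma not_dvd_choose_ord_proj {p a M : ℕ} (hp : p.Prime) (hM : ¬ p ∣ M) (hM1 : 0 < M) :
    ¬ p ∣ (p ^ a * M).choose (p ^ a) := by
  haveI : Fact p.Prime := ⟨hp⟩
  set N := p ^ a * M with hNdef
  have hkN : p ^ a ≤ N := Nat.le_mul_of_pos_right _ hM1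
  have hNk : N - p ^ a = p ^ a * (M - 1) := by
    rw [hNdef, Nat.mul_sub, Nat.mul_one]
  have hval : padicValNat p (N.choose (p ^ a)) = 0 := by
    rw [padicValNat_choose hkN (Nat.lt_succ_self (Nat.log p N))]
    rw [Finset.card_eq_zero, Finset.filter_eq_empty_iff]
    intro i hi
    simp only [Finset.mem_Ico] at hi
    by_cases hia : i ≤ a
    · have h1 : p ^ a % p ^ i = 0 := Nat.mod_eq_zero_of_dvd (pow_dvd_pow p hia)
      have h2 : (N - p ^ a) % p ^ i = 0 := Nat.mod_eq_zero_of_dvd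
        ((pow_dvd_pow p hia).trans (hNk ▸ Dvd.intro _ rfl))
      have hpi : 0 < p ^ i := pow_pos hp.pos i
      omega
    · push_neg at hia
      obtain ⟨j, hj, hj1⟩ : ∃ j, i = a + j ∧ 1 ≤ j := ⟨i - a, by omega, by omega⟩
      have h1 : p ^ a % p ^ i = p ^ a :=
        Nat.mod_eq_of_lt (Nat.pow_lt_pow_right hp.one_lt hia)
      have h2 : (N - p ^ a) % p ^ i = p ^ a * ((M - 1) % p ^ j) := by
        rw [hNk, hj, pow_add, Nat.mul_mod_mul_left]
      set r := (M - 1) % p ^ j with hr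
      have hrlt : r < p ^ j := Nat.mod_lt _ (pow_pos hp.pos j)
      have hrne : r + 1 ≠ p ^ j := by
        intro hcon
        apply hM
        have hd := Nat.div_add_mod (M - 1) (p ^ j)
        refine dvd_trans (dvd_pow_self p (by omega : j ≠ 0)) ⟨(M - 1) / p ^ j + 1, ?_⟩
        rw [Nat.mul_add, Nat.mul_one]
        omega
      have e2 : p ^ a * (r + 1) < p ^ a * p ^ j :=
        mul_lt_mul_of_pos_left (by omega) (pow_pos hp.pos a)
      have e1 : p ^ a * (r + 1) = p ^ a * r + p ^ a := by ring
      rw [h1, h2, hj, pow_add]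
      omega
  intro hdvd
  have hne : N.choose (p ^ a) ≠ 0 := (Nat.choose_pos hkN).ne'
  have h3 := (Nat.Prime.pow_dvd_iff_le_factorization (k := 1) hp hne).1
    (by rw [pow_one]; exact hdvd)
  rw [Nat.factorization_def _ hp, hval] at h3
  omega

theorem stmt_2 (N : ℕ) (hN : 1 < N) :
    (¬ IsPrimePow N → (Finset.Icc 1 (N - 1)).gcd (fun i => N.choose i) = 1) ∧
    (∀ p m : ℕ, p.Prime → 0 < m → N = p ^ m →
      (Finset.Icc 1 (N - 1)).gcd (fun i => N.choose i) = p) := by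
  set g := (Finset.Icc 1 (N - 1)).gcd (fun i => N.choose i) with hg
  have h1mem : (1 : ℕ) ∈ Finset.Icc 1 (N - 1) := by simp; omega
  have hgN : g ∣ N := by
    have := Finset.gcd_dvd (f := fun i => N.choose i) h1mem
    simpa using this
  constructor
  · intro hnpp
    by_contra hg1
    obtain ⟨q, hq, hqg⟩ := Nat.exists_prime_and_dvd hg1
    have hqN : q ∣ N := hqg.trans hgN
    set a := N.factorization q with ha
    have ha1 : 1 ≤ a := (Nat.Prime.dvd_iff_one_le_factorization hq (by omega)).1 hqN
    set M := N / q ^ a with hM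
    have hNM : q ^ a * M = N := Nat.ordProj_mul_ordCompl_eq_self N q
    have hqM : ¬ q ∣ M := Nat.not_dvd_ordCompl hq (by omega)
    have hM1 : 0 < M := by
      rcases Nat.eq_zero_or_pos M with h | h
      · rw [h, Nat.mul_zero] at hNM; omega
      · exact h
    have hMne1 : M ≠ 1 := by
      intro h
      exact hnpp ⟨q, a, hq.prime, by omega, by rw [← hNM, h, Nat.mul_one]⟩
    have hmem : q ^ a ∈ Finset.Icc 1 (N - 1) := by
      have h1 : 1 ≤ q ^ a := Nat.one_le_pow _ _ hq.pos
      have h2 : q ^ a * 2 ≤ q ^ a * M := Nat.mul_le_mul_left _ (by omega)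
      simp only [Finset.mem_Icc]
      omega
    have hdvd : g ∣ N.choose (q ^ a) := Finset.gcd_dvd hmem
    exact not_dvd_choose_ord_proj hq hqM hM1 (by rw [hNM]; exact hqg.trans hdvd)
  · intro p m hp hm hNpm
    haveI : Fact p.Prime := ⟨hp⟩
    -- p divides g
    have hpg : p ∣ g := by
      apply Finset.dvd_gcd
      intro i hi
      simp only [Finset.mem_Icc] at hi
      exact hNpm ▸ hp.dvd_choose_pow (by omega) (by omega)
    -- g divides C(p^m, p^(m-1)), which has p-adic valuation 1
    have hkmem : p ^ (m - 1) ∈ Finset.Icc 1 (N - 1) := by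
      have h1 : 1 ≤ p ^ (m - 1) := Nat.one_le_pow _ _ hp.pos
      have h2 : p ^ (m - 1) < p ^ m := Nat.pow_lt_pow_right hp.one_lt (by omega)
      simp only [Finset.mem_Icc]
      omega
    have hgC : g ∣ N.choose (p ^ (m - 1)) := Finset.gcd_dvd hkmem
    have hCpos : 0 < N.choose (p ^ (m - 1)) := by
      apply Nat.choose_pos
      rw [hNpm]
      exact (Nat.pow_lt_pow_right hp.one_lt (by omega)).le
    have hval : padicValNat p (N.choose (p ^ (m - 1))) = 1 := by
      have := hp.emultiplicity_choose_prime_pow (k := p ^ (m - 1)) (n := m)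
        (Nat.pow_lt_pow_right hp.one_lt (by omega)).le (pow_pos hp.pos _).ne'
      rw [multiplicity_pow_self hp.ne_zero hp.prime.not_unit] at this
      rw [← hNpm] at this
      have h2 := padicValNat_eq_emultiplicity (p := p) hCpos.ne'
      rw [← h2] at this
      have hm1 : m - (m - 1) = 1 := by omega
      rw [hm1] at this
      exact_mod_cast this
    -- g = p^j for some j
    obtain ⟨j, hjm, hgj⟩ := (Nat.dvd_prime_pow hp).1 (hNpm ▸ hgN)
    have hj1 : 1 ≤ j := by
      rcases Nat.eq_zero_or_pos j with h | h
      · rw [h, pow_zero] at hgj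
        rw [hgj] at hpg
        have := Nat.le_of_dvd one_pos hpg
        have := hp.two_le
        omega
      · exact h
    have hjle : j ≤ 1 := by
      have := (Nat.Prime.pow_dvd_iff_le_factorization hp hCpos.ne').1 (hgj ▸ hgC)
      rw [Nat.factorization_def _ hp, hval] at this
      exact this
    rw [hgj]
    have : j = 1 := by omega
    rw [this, pow_one]
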